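/- Let k ≥ 1, let Ω ⊆ ℝ⁴ be open, let u : Ω → ℝ^{k+1} be a C⁵ map with |u(x)| = 1 for all x ∈ Ω, and let h : Ω → ℝ^{k+1} be continuous with ⟨h(x), u(x)⟩ = 0 for all x ∈ Ω. For a, b ∈ ℝ^{k+1} let a × b ∈ ℝ^{(k+1)×(k+1)} denote the wedge product with entries (a × b)_{αβ} = a_α b_β − a_β b_α. Then u satisfies the approximate biharmonic map equation Δ²u + (|Δu|² + Δ(|∇u|²) + 2⟨∇u, ∇Δu⟩)u = h on Ω if and only if, componentwise on Ω, Δ(∑_{i=1}^4 ∂_i(∂_i u × u)) = 2∑_{i=1}^4 ∂_i(Δu × ∂_i u) + h × u. -/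

import Mathlib

open MeasureTheory Metric Set Filter
open scoped ENNReal

noncomputable section

abbrev E4 := EuclideanSpace ℝ (Fin 4)

/-- partial derivative `∂ᵢ f` of a scalar function on `ℝ⁴` -/
def pd (i : Fin 4) (f : E4 → ℝ) : E4 → ℝ :=
  fun x => fderiv ℝ f x (EuclideanSpace.single i (1 : ℝ))

/-- Laplacian of a scalar function -/
def lap (f : E4 → ℝ) : E4 → ℝ := fun x => ∑ i : Fin 4, pd i (pd i f) x

/-- bilaplacian -/
def bilap (f : E4 → ℝ) : E4 → ℝ := lap (lap f)

/-- `|∇u|²` -/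
def gradSq {k : ℕ} (u : E4 → EuclideanSpace ℝ (Fin (k+1))) : E4 → ℝ :=
  fun x => ∑ i : Fin 4, ∑ a : Fin (k+1), (pd i (fun y => u y a) x) ^ 2

/-- `|Δu|²` -/
def lapNormSq {k : ℕ} (u : E4 → EuclideanSpace ℝ (Fin (k+1))) : E4 → ℝ :=
  fun x => ∑ a : Fin (k+1), (lap (fun y => u y a) x) ^ 2

/-- `⟨∇u, ∇Δu⟩` -/
def gradLapInner {k : ℕ} (u : E4 → EuclideanSpace ℝ (Fin (k+1))) : E4 → ℝ :=
  fun x => ∑ i : Fin 4, ∑ a : Fin (k+1),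
    pd i (fun y => u y a) x * pd i (lap (fun y => u y a)) x

/-- `|∇²u|²` -/
def hessSq {k : ℕ} (u : E4 → EuclideanSpace ℝ (Fin (k+1))) : E4 → ℝ :=
  fun x => ∑ i : Fin 4, ∑ j : Fin 4, ∑ a : Fin (k+1),
    (pd i (pd j (fun y => u y a)) x) ^ 2

/-- approximate biharmonic map equation `Δ²u + (|Δu|² + Δ|∇u|² + 2⟨∇u,∇Δu⟩)u = h` on `Ω` -/
def IsApproxBiharm {k : ℕ} (u h : E4 → EuclideanSpace ℝ (Fin (k+1)))
    (Ω : Set E4) : Prop :=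
  ∀ x ∈ Ω, ∀ a : Fin (k+1),
    bilap (fun y => u y a) x
      + (lapNormSq u x + lap (gradSq u) x + 2 * gradLapInner u x) * u x a = h x a

/-- `‖∇²u‖_{L²(U)}` -/
def l2Hess {k : ℕ} (u : E4 → EuclideanSpace ℝ (Fin (k+1))) (U : Set E4) : ℝ :=
  Real.sqrt (∫ x in U, hessSq u x)

/-- `‖h‖_{L^p(U)}` -/
def lpNorm {k : ℕ} (p : ℝ) (h : E4 → EuclideanSpace ℝ (Fin (k+1))) (U : Set E4) : ℝ :=
  (∫ x in U, ‖h x‖ ^ p) ^ (1 / p)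

/-- Lorentz `L^{2,1}` quasinorm on `U` -/
def lorentz21 (f : E4 → ℝ) (U : Set E4) : ℝ≥0∞ :=
  2 * ∫⁻ s in Set.Ioi (0 : ℝ), (volume {x | x ∈ U ∧ s < |f x|}) ^ (1/2 : ℝ)

/-- weak `L^{2,∞}` quasinorm on `U` -/
def weak2 (f : E4 → ℝ) (U : Set E4) : ℝ≥0∞ :=
  ⨆ (t : ℝ) (_ : 0 < t), ENNReal.ofReal t * (volume {x | x ∈ U ∧ t < |f x|}) ^ (1/2 : ℝ)

/-- wedge product on `ℝ^{k+1}`: `(a × b)_{αβ} = a_α b_β − a_β b_α` -/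
def wedge {k : ℕ} (a b : Fin (k+1) → ℝ) : Fin (k+1) → Fin (k+1) → ℝ :=
  fun α β => a α * b β - a β * b α

/- ============ auxiliary toolbox ============ -/

section Tools

variable {Ω : Set E4} {x : E4} {f g : E4 → ℝ} {i : Fin 4}

lemma pd_congr_pt (h : f =ᶠ[nhds x] g) : pd i f x = pd i g x := by
  unfold pd; rw [h.fderiv_eq]

lemma pd_congr_nhds (h : f =ᶠ[nhds x] g) : pd i f =ᶠ[nhds x] pd i g := by
  filter_upwards [h.eventually_nhds] with y hy using pd_congr_pt hy

lemma lap_congr_pt (h : f =ᶠ[nhds x] g) : lap f x = lap g x := by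
  unfold lap; exact Finset.sum_congr rfl fun i _ => pd_congr_pt (pd_congr_nhds h)

lemma pd_const (c : ℝ) : pd i (fun _ => c) = fun _ => 0 := by
  funext x; simp [pd]

lemma lap_const (c : ℝ) : lap (fun _ => c) = fun _ => 0 := by
  funext x; simp [lap, pd_const]

lemma pd_add (hf : DifferentiableAt ℝ f x) (hg : DifferentiableAt ℝ g x) :
    pd i (fun y => f y + g y) x = pd i f x + pd i g x := by
  simp [pd, fderiv_fun_add hf hg]

lemma pd_sub (hf : DifferentiableAt ℝ f x) (hg : DifferentiableAt ℝ g x) :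
    pd i (fun y => f y - g y) x = pd i f x - pd i g x := by
  simp [pd, fderiv_fun_sub hf hg]

lemma pd_mul (hf : DifferentiableAt ℝ f x) (hg : DifferentiableAt ℝ g x) :
    pd i (fun y => f y * g y) x = pd i f x * g x + f x * pd i g x := by
  simp [pd, fderiv_fun_mul hf hg]; ring

lemma pd_sum {ι : Type*} (s : Finset ι) (F : ι → E4 → ℝ)
    (hF : ∀ j ∈ s, DifferentiableAt ℝ (F j) x) :
    pd i (fun y => ∑ j ∈ s, F j y) x = ∑ j ∈ s, pd i (F j) x := by
  simp [pd, fderiv_fun_sum hF]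

lemma pd_contDiffOn {n m : WithTop ℕ∞} (hΩ : IsOpen Ω) (hf : ContDiffOn ℝ m f Ω)
    (hn : n + 1 ≤ m) : ContDiffOn ℝ n (pd i f) Ω := by
  have h1 : ContDiffOn ℝ n (fderiv ℝ f) Ω := hf.fderiv_of_isOpen hΩ hn
  exact (ContinuousLinearMap.apply ℝ ℝ (EuclideanSpace.single i 1)).contDiff.comp_contDiffOn h1

lemma lap_contDiffOn {n m : WithTop ℕ∞} (hΩ : IsOpen Ω) (hf : ContDiffOn ℝ m f Ω)
    (hn : n + 1 + 1 ≤ m) : ContDiffOn ℝ n (lap f) Ω :=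
  ContDiffOn.sum fun i _ => pd_contDiffOn hΩ (pd_contDiffOn hΩ hf hn) le_rfl

lemma diffAt (hΩ : IsOpen Ω) (hx : x ∈ Ω) (hf : ContDiffOn ℝ 1 f Ω) : DifferentiableAt ℝ f x :=
  (hf.contDiffAt (hΩ.mem_nhds hx)).differentiableAt one_ne_zero

lemma pd_neg' : pd i (fun y => -(f y)) = fun y => -(pd i f y) := by
  funext y; simp [pd, fderiv_neg]

lemma pd_neg_pt : pd i (fun y => -(f y)) x = -(pd i f x) := by
  simp [pd, fderiv_neg]

lemma lap_neg : lap (fun y => -(f y)) x = -(lap f x) := by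
  unfold lap
  rw [← Finset.sum_neg_distrib]
  refine Finset.sum_congr rfl fun j _ => ?_
  calc pd j (pd j fun y => -f y) x = pd j (fun y => -(pd j f y)) x := by rw [pd_neg']
    _ = -(pd j (pd j f) x) := pd_neg_pt

lemma lap_mul (hΩ : IsOpen Ω) (hx : x ∈ Ω) (hf : ContDiffOn ℝ 2 f Ω) (hg : ContDiffOn ℝ 2 g Ω) :
    lap (fun y => f y * g y) x =
      lap f x * g x + 2 * (∑ i : Fin 4, pd i f x * pd i g x) + f x * lap g x := by
  have hf1 : ContDiffOn ℝ 1 f Ω := hf.of_le (by norm_num)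
  have hg1 : ContDiffOn ℝ 1 g Ω := hg.of_le (by norm_num)
  have hpf : ∀ j : Fin 4, ContDiffOn ℝ 1 (pd j f) Ω := fun j =>
    pd_contDiffOn hΩ hf (by norm_num)
  have hpg : ∀ j : Fin 4, ContDiffOn ℝ 1 (pd j g) Ω := fun j =>
    pd_contDiffOn hΩ hg (by norm_num)
  have key : ∀ j : Fin 4, pd j (pd j (fun y => f y * g y)) x
      = pd j (pd j f) x * g x + 2*(pd j f x * pd j g x) + f x * pd j (pd j g) x := by
    intro j
    have E : pd j (fun y => f y * g y) =ᶠ[nhds x] fun y => pd j f y * g y + f y * pd j g y := by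
      filter_upwards [hΩ.mem_nhds hx] with y hy using
        pd_mul (diffAt hΩ hy hf1) (diffAt hΩ hy hg1)
    rw [pd_congr_pt E,
      pd_add ((diffAt hΩ hx (hpf j)).fun_mul (diffAt hΩ hx hg1))
        ((diffAt hΩ hx hf1).fun_mul (diffAt hΩ hx (hpg j))),
      pd_mul (diffAt hΩ hx (hpf j)) (diffAt hΩ hx hg1),
      pd_mul (diffAt hΩ hx hf1) (diffAt hΩ hx (hpg j))]
    ring
  show ∑ j : Fin 4, pd j (pd j (fun y => f y * g y)) x = _
  rw [Finset.sum_congr rfl fun j _ => key j]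
  simp only [Finset.sum_add_distrib, ← Finset.sum_mul, ← Finset.mul_sum, lap]

lemma lap_sub (hΩ : IsOpen Ω) (hx : x ∈ Ω) (hf : ContDiffOn ℝ 2 f Ω) (hg : ContDiffOn ℝ 2 g Ω) :
    lap (fun y => f y - g y) x = lap f x - lap g x := by
  have hf1 : ContDiffOn ℝ 1 f Ω := hf.of_le (by norm_num)
  have hg1 : ContDiffOn ℝ 1 g Ω := hg.of_le (by norm_num)
  have key : ∀ j : Fin 4, pd j (pd j (fun y => f y - g y)) x
      = pd j (pd j f) x - pd j (pd j g) x := by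
    intro j
    have E : pd j (fun y => f y - g y) =ᶠ[nhds x] fun y => pd j f y - pd j g y := by
      filter_upwards [hΩ.mem_nhds hx] with y hy using
        pd_sub (diffAt hΩ hy hf1) (diffAt hΩ hy hg1)
    rw [pd_congr_pt E, pd_sub (diffAt hΩ hx (pd_contDiffOn hΩ hf (by norm_num)))
      (diffAt hΩ hx (pd_contDiffOn hΩ hg (by norm_num)))]
  show ∑ j : Fin 4, pd j (pd j (fun y => f y - g y)) x = _
  rw [Finset.sum_congr rfl fun j _ => key j, Finset.sum_sub_distrib]
  rfl

lemma lap_sum {ι : Type*} (hΩ : IsOpen Ω) (hx : x ∈ Ω) (s : Finset ι) (F : ι → E4 → ℝ)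
    (hF : ∀ j ∈ s, ContDiffOn ℝ 2 (F j) Ω) :
    lap (fun y => ∑ j ∈ s, F j y) x = ∑ j ∈ s, lap (F j) x := by
  have key : ∀ i : Fin 4, pd i (pd i (fun y => ∑ j ∈ s, F j y)) x
      = ∑ j ∈ s, pd i (pd i (F j)) x := by
    intro i
    have E : pd i (fun y => ∑ j ∈ s, F j y) =ᶠ[nhds x] fun y => ∑ j ∈ s, pd i (F j) y := by
      filter_upwards [hΩ.mem_nhds hx] with y hy using
        pd_sum s F fun j hj => diffAt hΩ hy ((hF j hj).of_le (by norm_num))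
    rw [pd_congr_pt E, pd_sum s _ fun j hj =>
      diffAt hΩ hx (pd_contDiffOn hΩ (hF j hj) (by norm_num))]
  show ∑ i : Fin 4, pd i (pd i (fun y => ∑ j ∈ s, F j y)) x = _
  rw [Finset.sum_congr rfl fun i _ => key i, Finset.sum_comm]
  rfl

end Tools

/-- for a `C⁵` sphere-valued map `u` and continuous `h` with `⟨h, u⟩ = 0`,
the approximate biharmonic map equation is equivalent to
`Δ(∑ᵢ ∂ᵢ(∂ᵢu × u)) = 2∑ᵢ ∂ᵢ(Δu × ∂ᵢu) + h × u` componentwise. -/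
theorem stmt3 {k : ℕ} (hk : 1 ≤ k) (Ω : Set E4) (hΩ : IsOpen Ω)
    (u h : E4 → EuclideanSpace ℝ (Fin (k+1)))
    (hu : ContDiffOn ℝ 5 u Ω) (hunit : ∀ x ∈ Ω, ‖u x‖ = 1)
    (hh : ContinuousOn h Ω)
    (horth : ∀ x ∈ Ω, (∑ a : Fin (k+1), h x a * u x a) = 0) :
    IsApproxBiharm u h Ω ↔
      ∀ x ∈ Ω, ∀ α β : Fin (k+1),
        lap (fun y => ∑ i : Fin 4,
            pd i (fun z => wedge (fun b => pd i (fun w => u w b) z) (fun b => u z b) α β) y) x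
          = 2 * (∑ i : Fin 4,
              pd i (fun z => wedge (fun b => lap (fun w => u w b) z)
                (fun b => pd i (fun w => u w b) z) α β) x)
            + wedge (fun b => h x b) (fun b => u x b) α β := by
  classical
  have h5 : ∀ a : Fin (k+1), ContDiffOn ℝ 5 (fun y => u y a) Ω := fun a =>
    (PiLp.proj (𝕜 := ℝ) 2 (fun _ : Fin (k+1) => ℝ) a).contDiff.comp_contDiffOn hu
  have hc2 : ∀ a, ContDiffOn ℝ 2 (fun y => u y a) Ω := fun a => (h5 a).of_le (by norm_num)
  have hc1 : ∀ a, ContDiffOn ℝ 1 (fun y => u y a) Ω := fun a => (h5 a).of_le (by norm_num)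
  have hpd1 : ∀ (i : Fin 4) (a : Fin (k+1)), ContDiffOn ℝ 1 (pd i (fun y => u y a)) Ω :=
    fun i a => pd_contDiffOn hΩ (h5 a) (by norm_num)
  have hlap2 : ∀ a, ContDiffOn ℝ 2 (lap (fun y => u y a)) Ω := fun a =>
    lap_contDiffOn hΩ (h5 a) (by norm_num)
  have hlap1 : ∀ a, ContDiffOn ℝ 1 (lap (fun y => u y a)) Ω := fun a =>
    (hlap2 a).of_le (by norm_num)
  have dc : ∀ (a : Fin (k+1)), ∀ y ∈ Ω, DifferentiableAt ℝ (fun z => u z a) y :=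
    fun a y hy => diffAt hΩ hy (hc1 a)
  have dpd : ∀ (i : Fin 4) (a : Fin (k+1)), ∀ y ∈ Ω,
      DifferentiableAt ℝ (pd i (fun z => u z a)) y :=
    fun i a y hy => diffAt hΩ hy (hpd1 i a)
  have dlap : ∀ (a : Fin (k+1)), ∀ y ∈ Ω, DifferentiableAt ℝ (lap (fun z => u z a)) y :=
    fun a y hy => diffAt hΩ hy (hlap1 a)
  -- unit norm as sum of squares
  have hS : ∀ x ∈ Ω, ∑ a : Fin (k+1), u x a * u x a = 1 := by
    intro x hx
    have h2 : (inner ℝ (u x) (u x) : ℝ) = 1 := by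
      rw [real_inner_self_eq_norm_sq, hunit x hx]; norm_num
    rw [← h2, PiLp.inner_apply]
    simp [RCLike.inner_apply, sq]
  -- first differentiated identity : ⟨u, Δu⟩ = -|∇u|²
  have hG : ∀ x ∈ Ω, ∑ a : Fin (k+1), u x a * lap (fun y => u y a) x = -(gradSq u x) := by
    intro x hx
    have e0 : lap (fun y => ∑ a : Fin (k+1), u y a * u y a) x = 0 := by
      have hev : (fun y => ∑ a : Fin (k+1), u y a * u y a) =ᶠ[nhds x] fun _ => (1:ℝ) := by
        filter_upwards [hΩ.mem_nhds hx] with y hy using hS y hy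
      rw [lap_congr_pt hev, lap_const]
    have e1 : lap (fun y => ∑ a : Fin (k+1), u y a * u y a) x
        = ∑ a : Fin (k+1), (lap (fun y => u y a) x * u x a
            + 2 * (∑ i : Fin 4, pd i (fun y => u y a) x * pd i (fun y => u y a) x)
            + u x a * lap (fun y => u y a) x) := by
      rw [lap_sum hΩ hx Finset.univ (fun a => fun y => u y a * u y a)
        (fun a _ => (hc2 a).mul (hc2 a))]
      exact Finset.sum_congr rfl fun a _ => lap_mul hΩ hx (hc2 a) (hc2 a)
    have e2 : gradSq u x = ∑ a : Fin (k+1), ∑ i : Fin 4,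
        pd i (fun y => u y a) x * pd i (fun y => u y a) x := by
      simp only [gradSq, pow_two]
      rw [Finset.sum_comm]
    rw [e1] at e0
    simp only [Finset.sum_add_distrib] at e0
    have e3 : ∑ a : Fin (k+1), lap (fun y => u y a) x * u x a
        = ∑ a : Fin (k+1), u x a * lap (fun y => u y a) x :=
      Finset.sum_congr rfl fun a _ => mul_comm _ _
    have e4 : ∑ a : Fin (k+1),
        2 * (∑ i : Fin 4, pd i (fun y => u y a) x * pd i (fun y => u y a) x)
        = 2 * gradSq u x := by
      rw [← Finset.mul_sum, ← e2]
    rw [e3, e4] at e0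
    linarith
  -- key identity : ⟨u, Δ²u⟩ = -(|Δu|² + Δ|∇u|² + 2⟨∇u, ∇Δu⟩)
  have hKey : ∀ x ∈ Ω, ∑ a : Fin (k+1), u x a * lap (lap (fun y => u y a)) x
      = -(lapNormSq u x + lap (gradSq u) x + 2 * gradLapInner u x) := by
    intro x hx
    have e0 : lap (fun y => ∑ a : Fin (k+1), u y a * lap (fun w => u w a) y) x
        = -(lap (gradSq u) x) := by
      have hev : (fun y => ∑ a : Fin (k+1), u y a * lap (fun w => u w a) y)
          =ᶠ[nhds x] fun y => -(gradSq u y) := by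
        filter_upwards [hΩ.mem_nhds hx] with y hy using hG y hy
      rw [lap_congr_pt hev, lap_neg]
    have e1 : lap (fun y => ∑ a : Fin (k+1), u y a * lap (fun w => u w a) y) x
        = ∑ a : Fin (k+1), (lap (fun y => u y a) x * lap (fun w => u w a) x
            + 2 * (∑ i : Fin 4, pd i (fun y => u y a) x * pd i (lap (fun w => u w a)) x)
            + u x a * lap (lap (fun w => u w a)) x) := by
      rw [lap_sum hΩ hx Finset.univ (fun a => fun y => u y a * lap (fun w => u w a) y)
        (fun a _ => (hc2 a).mul (hlap2 a))]
      exact Finset.sum_congr rfl fun a _ => lap_mul hΩ hx (hc2 a) (hlap2 a)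
    rw [e1] at e0
    simp only [Finset.sum_add_distrib] at e0
    have e2 : ∑ a : Fin (k+1), lap (fun y => u y a) x * lap (fun w => u w a) x
        = lapNormSq u x := by
      simp only [lapNormSq, pow_two]
    have e3 : ∑ a : Fin (k+1),
        2 * (∑ i : Fin 4, pd i (fun y => u y a) x * pd i (lap (fun w => u w a)) x)
        = 2 * gradLapInner u x := by
      rw [← Finset.mul_sum]
      congr 1
      simp only [gradLapInner]
      rw [Finset.sum_comm]
    rw [e2, e3] at e0
    linarith
  -- pointwise simplification of ∑ᵢ ∂ᵢ(∂ᵢu × u)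
  have hA : ∀ (α β : Fin (k+1)), ∀ y ∈ Ω,
      (∑ i : Fin 4,
        pd i (fun z => wedge (fun b => pd i (fun w => u w b) z) (fun b => u z b) α β) y)
      = lap (fun w => u w α) y * u y β - lap (fun w => u w β) y * u y α := by
    intro α β y hy
    have step : ∀ i : Fin 4,
        pd i (fun z => wedge (fun b => pd i (fun w => u w b) z) (fun b => u z b) α β) y
        = pd i (pd i (fun w => u w α)) y * u y β
          - pd i (pd i (fun w => u w β)) y * u y α := by
      intro i
      simp only [wedge]
      rw [pd_sub ((dpd i α y hy).fun_mul (dc β y hy)) ((dpd i β y hy).fun_mul (dc α y hy)),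
          pd_mul (dpd i α y hy) (dc β y hy), pd_mul (dpd i β y hy) (dc α y hy)]
      ring
    rw [Finset.sum_congr rfl fun i _ => step i, Finset.sum_sub_distrib,
      ← Finset.sum_mul, ← Finset.sum_mul]
    rfl
  -- expansion of the left-hand side
  have hL : ∀ (α β : Fin (k+1)), ∀ x ∈ Ω,
      lap (fun y => ∑ i : Fin 4,
          pd i (fun z => wedge (fun b => pd i (fun w => u w b) z) (fun b => u z b) α β) y) x
      = lap (lap (fun w => u w α)) x * u x β - lap (lap (fun w => u w β)) x * u x α
        + 2 * (∑ i : Fin 4, (pd i (lap (fun w => u w α)) x * pd i (fun w => u w β) x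
            - pd i (lap (fun w => u w β)) x * pd i (fun w => u w α) x)) := by
    intro α β x hx
    have hev : (fun y => ∑ i : Fin 4,
          pd i (fun z => wedge (fun b => pd i (fun w => u w b) z) (fun b => u z b) α β) y)
        =ᶠ[nhds x]
        fun y => lap (fun w => u w α) y * u y β - lap (fun w => u w β) y * u y α := by
      filter_upwards [hΩ.mem_nhds hx] with y hy using hA α β y hy
    rw [lap_congr_pt hev,
        lap_sub hΩ hx ((hlap2 α).mul (hc2 β)) ((hlap2 β).mul (hc2 α)),
        lap_mul hΩ hx (hlap2 α) (hc2 β), lap_mul hΩ hx (hlap2 β) (hc2 α),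
        Finset.sum_sub_distrib]
    ring
  -- expansion of the first right-hand term
  have hR : ∀ (α β : Fin (k+1)), ∀ x ∈ Ω,
      (∑ i : Fin 4, pd i (fun z => wedge (fun b => lap (fun w => u w b) z)
          (fun b => pd i (fun w => u w b) z) α β) x)
      = ∑ i : Fin 4, (pd i (lap (fun w => u w α)) x * pd i (fun w => u w β) x
          - pd i (lap (fun w => u w β)) x * pd i (fun w => u w α) x) := by
    intro α β x hx
    have step : ∀ i : Fin 4,
        pd i (fun z => wedge (fun b => lap (fun w => u w b) z)
          (fun b => pd i (fun w => u w b) z) α β) x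
        = (pd i (lap (fun w => u w α)) x * pd i (fun w => u w β) x
            - pd i (lap (fun w => u w β)) x * pd i (fun w => u w α) x)
          + (lap (fun w => u w α) x * pd i (pd i (fun w => u w β)) x
            - lap (fun w => u w β) x * pd i (pd i (fun w => u w α)) x) := by
      intro i
      simp only [wedge]
      rw [pd_sub ((dlap α x hx).fun_mul (dpd i β x hx)) ((dlap β x hx).fun_mul (dpd i α x hx)),
          pd_mul (dlap α x hx) (dpd i β x hx), pd_mul (dlap β x hx) (dpd i α x hx)]
      ring
    rw [Finset.sum_congr rfl fun i _ => step i, Finset.sum_add_distrib]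
    have hz : ∑ i : Fin 4, (lap (fun w => u w α) x * pd i (pd i (fun w => u w β)) x
        - lap (fun w => u w β) x * pd i (pd i (fun w => u w α)) x) = 0 := by
      rw [Finset.sum_sub_distrib, ← Finset.mul_sum, ← Finset.mul_sum]
      show lap (fun w => u w α) x * lap (fun w => u w β) x
        - lap (fun w => u w β) x * lap (fun w => u w α) x = 0
      ring
    rw [hz, add_zero]
  -- main equivalence
  constructor
  · intro hB x hx α β
    rw [hL α β x hx, hR α β x hx]
    have eα := hB x hx α
    have eβ := hB x hx β
    simp only [bilap] at eα eβ
    simp only [wedge]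
    have Eα : lap (lap (fun y => u y α)) x
        = h x α - (lapNormSq u x + lap (gradSq u) x + 2 * gradLapInner u x) * u x α := by
      linarith
    have Eβ : lap (lap (fun y => u y β)) x
        = h x β - (lapNormSq u x + lap (gradSq u) x + 2 * gradLapInner u x) * u x β := by
      linarith
    rw [Eα, Eβ]
    ring
  · intro hW x hx a
    simp only [bilap]
    have base : ∀ b : Fin (k+1),
        lap (lap (fun y => u y a)) x * u x b - lap (lap (fun y => u y b)) x * u x a
        = h x a * u x b - h x b * u x a := by
      intro b
      have hw := hW x hx a b
      rw [hL a b x hx, hR a b x hx] at hw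
      simp only [wedge] at hw
      linarith
    have L1 : ∑ b : Fin (k+1),
        (lap (lap (fun y => u y a)) x * u x b - lap (lap (fun y => u y b)) x * u x a) * u x b
        = ∑ b : Fin (k+1), (h x a * u x b - h x b * u x a) * u x b :=
      Finset.sum_congr rfl fun b _ => by rw [base b]
    have L2 : ∑ b : Fin (k+1),
        (lap (lap (fun y => u y a)) x * u x b - lap (lap (fun y => u y b)) x * u x a) * u x b
        = lap (lap (fun y => u y a)) x * (∑ b : Fin (k+1), u x b * u x b)
          - (∑ b : Fin (k+1), u x b * lap (lap (fun y => u y b)) x) * u x a := by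
      rw [Finset.mul_sum, Finset.sum_mul, ← Finset.sum_sub_distrib]
      exact Finset.sum_congr rfl fun b _ => by ring
    have L3 : ∑ b : Fin (k+1), (h x a * u x b - h x b * u x a) * u x b
        = h x a * (∑ b : Fin (k+1), u x b * u x b)
          - (∑ b : Fin (k+1), h x b * u x b) * u x a := by
      rw [Finset.mul_sum, Finset.sum_mul, ← Finset.sum_sub_distrib]
      exact Finset.sum_congr rfl fun b _ => by ring
    rw [L2, L3, hS x hx, hKey x hx, horth x hx] at L1
    linear_combination L1

end
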